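/- (Theorem 1.) Let t ↦ (X(t), y(t)) be a differentiable trajectory of the replicator dynamics with all entries of X(t) and y(t) positive, and let (x*, y*) be an interior Nash equilibrium with value u*. If at time t the matrix X(t)ᵀU is positive definite for zero-sum vectors and y(t) ≠ y*, then d/dt D(X(t), y(t)) < 0. -/

import Mathlib

/-- Theorem 1: Along a differentiable trajectory of the replicator dynamics
with positive entries, if at time `t` the matrix `X(t)ᵀU` is positive definite for zero-sum
vectors and `y(t) ≠ y*`, then `d/dt D(X(t), y(t)) < 0`, where `D` is the conditional-sum
divergence and `(x*, y*)` is an interior Nash equilibrium with value `u*`. -/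
theorem stmt_4 (mX mY : ℕ) (U : Fin mX → Fin mY → ℝ)
    (X : ℝ → Fin mX → Fin mY → ℝ) (Y : ℝ → Fin mY → ℝ)
    (hXpos : ∀ t i j, 0 < X t i j) (hYpos : ∀ t j, 0 < Y t j)
    (hXsum : ∀ t j, ∑ i : Fin mX, X t i j = 1) (hYsum : ∀ t, ∑ j : Fin mY, Y t j = 1)
    -- replicator dynamics of X
    (hX : ∀ t i j, HasDerivAt (fun s => X s i j)
      (X t i j * ((Y t j * ∑ j' : Fin mY, U i j' * Y t j') -
        ∑ i' : Fin mX, X t i' j * (Y t j * ∑ j' : Fin mY, U i' j' * Y t j'))) t)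
    -- replicator dynamics of Y
    (hY : ∀ t j, HasDerivAt (fun s => Y s j)
      (-(Y t j * (((∑ i : Fin mX, U i j * (∑ j' : Fin mY, X t i j' * Y t j')) +
          ∑ i : Fin mX, X t i j * ∑ j' : Fin mY, U i j' * Y t j') -
        ∑ j₂ : Fin mY, Y t j₂ *
          ((∑ i : Fin mX, U i j₂ * (∑ j' : Fin mY, X t i j' * Y t j')) +
            ∑ i : Fin mX, X t i j₂ * ∑ j' : Fin mY, U i j' * Y t j')))) t)
    -- interior Nash equilibrium (x*, y*) with value u*
    (xs : Fin mX → ℝ) (ys : Fin mY → ℝ) (ustar : ℝ)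
    (hxspos : ∀ i, 0 < xs i) (hxssum : ∑ i : Fin mX, xs i = 1)
    (hyspos : ∀ j, 0 < ys j) (hyssum : ∑ j : Fin mY, ys j = 1)
    (hNx : ∀ j, ∑ i : Fin mX, U i j * xs i = ustar)
    (hNy : ∀ i, ∑ j : Fin mY, U i j * ys j = ustar)
    (t : ℝ)
    -- X(t)ᵀU is positive definite for zero-sum vectors
    (hPD : ∀ δ : Fin mY → ℝ, δ ≠ 0 → (∑ j : Fin mY, δ j) = 0 →
      0 < ∑ j : Fin mY, ∑ j' : Fin mY, δ j * (∑ i : Fin mX, X t i j * U i j') * δ j')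
    -- y(t) ≠ y*
    (hne : Y t ≠ ys) :
    deriv (fun s => (∑ j : Fin mY, ∑ i : Fin mX, xs i * Real.log (xs i / X s i j)) +
      ∑ j : Fin mY, ys j * Real.log (ys j / Y s j)) t < 0 := by
  -- notation
  set W : Fin mX → ℝ := fun i => ∑ j' : Fin mY, U i j' * Y t j' with hW
  set R : Fin mY → ℝ := fun j => ∑ i : Fin mX, U i j * (∑ j' : Fin mY, X t i j' * Y t j') with hR
  set P : Fin mY → ℝ := fun j => ∑ i : Fin mX, X t i j * W i with hP
  -- derivative computation
  have hD : HasDerivAt (fun s => (∑ j : Fin mY, ∑ i : Fin mX, xs i * Real.log (xs i / X s i j)) +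
      ∑ j : Fin mY, ys j * Real.log (ys j / Y s j))
      ((∑ j : Fin mY, ∑ i : Fin mX,
          -(xs i * ((Y t j * W i) - ∑ i' : Fin mX, X t i' j * (Y t j * W i')))) +
        ∑ j : Fin mY, ys j * ((R j + P j) - ∑ j₂ : Fin mY, Y t j₂ * (R j₂ + P j₂))) t := by
    apply HasDerivAt.add
    · apply HasDerivAt.fun_sum
      intro j _
      apply HasDerivAt.fun_sum
      intro i _
      have hfun : (fun s => xs i * Real.log (xs i / X s i j)) =
          fun s => xs i * Real.log (xs i) - xs i * Real.log (X s i j) := by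
        funext s
        rw [Real.log_div (hxspos i).ne' (hXpos s i j).ne', mul_sub]
      rw [hfun]
      have hlog := (hX t i j).log (hXpos t i j).ne'
      rw [mul_div_cancel_left₀ _ (hXpos t i j).ne'] at hlog
      exact (hlog.const_mul (xs i)).const_sub _
    · apply HasDerivAt.fun_sum
      intro j _
      have hfun : (fun s => ys j * Real.log (ys j / Y s j)) =
          fun s => ys j * Real.log (ys j) - ys j * Real.log (Y s j) := by
        funext s
        rw [Real.log_div (hyspos j).ne' (hYpos s j).ne', mul_sub]
      rw [hfun]
      have hlog := (hY t j).log (hYpos t j).ne'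
      rw [neg_div, mul_div_cancel_left₀ _ (hYpos t j).ne'] at hlog
      have h2 := (hlog.const_mul (ys j)).const_sub (ys j * Real.log (ys j))
      have : ys j * ((R j + P j) - ∑ j₂ : Fin mY, Y t j₂ * (R j₂ + P j₂)) =
          -(ys j * -((((∑ i : Fin mX, U i j * (∑ j' : Fin mY, X t i j' * Y t j')) +
            ∑ i : Fin mX, X t i j * ∑ j' : Fin mY, U i j' * Y t j') -
          ∑ j₂ : Fin mY, Y t j₂ *
            ((∑ i : Fin mX, U i j₂ * (∑ j' : Fin mY, X t i j' * Y t j')) +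
              ∑ i : Fin mX, X t i j₂ * ∑ j' : Fin mY, U i j' * Y t j')))) := by
        simp only [hR, hP, hW]
        ring
      rw [this]
      exact h2
  rw [hD.deriv]
  -- key sum identities
  have swap : ∀ j : Fin mY, P j = ∑ j' : Fin mY, (∑ i : Fin mX, X t i j * U i j') * Y t j' := by
    intro j
    simp only [hP, hW, Finset.mul_sum, Finset.sum_mul, mul_assoc]
    exact Finset.sum_comm
  have Fa : ∑ i : Fin mX, xs i * W i = ustar := by
    have h1 : ∀ j' : Fin mY, (∑ i, xs i * (U i j' * Y t j')) = ustar * Y t j' := by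
      intro j'
      rw [← hNx j', Finset.sum_mul]
      exact Finset.sum_congr rfl fun i _ => by ring
    calc ∑ i, xs i * W i = ∑ i, ∑ j', xs i * (U i j' * Y t j') := by simp [hW, Finset.mul_sum]
      _ = ∑ j', ∑ i, xs i * (U i j' * Y t j') := Finset.sum_comm
      _ = ∑ j', ustar * Y t j' := Finset.sum_congr rfl fun j' _ => h1 j'
      _ = ustar := by rw [← Finset.mul_sum, hYsum, mul_one]
  -- stationary strategy sums to 1
  have hstat : ∑ i : Fin mX, (∑ j' : Fin mY, X t i j' * Y t j') = 1 := by
    rw [Finset.sum_comm]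
    calc ∑ j' : Fin mY, ∑ i : Fin mX, X t i j' * Y t j'
        = ∑ j' : Fin mY, Y t j' := Finset.sum_congr rfl fun j' _ => by
          rw [← Finset.sum_mul, hXsum t j', one_mul]
      _ = 1 := hYsum t
  have Fc : ∑ j : Fin mY, ys j * R j = ustar := by
    have h1 : ∀ i : Fin mX, ∑ j : Fin mY, ys j * (U i j * (∑ j', X t i j' * Y t j'))
        = (∑ j', X t i j' * Y t j') * ustar := by
      intro i
      rw [← hNy i]
      have e := Finset.mul_sum (Finset.univ : Finset (Fin mY))
        (fun j => U i j * ys j) (∑ j', X t i j' * Y t j')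
      rw [e]
      exact Finset.sum_congr rfl fun j _ => by ring
    calc ∑ j : Fin mY, ys j * R j
        = ∑ j : Fin mY, ∑ i : Fin mX, ys j * (U i j * (∑ j', X t i j' * Y t j')) := by
          refine Finset.sum_congr rfl fun j _ => ?_
          simp only [hR]
          rw [Finset.mul_sum]
      _ = ∑ i : Fin mX, ∑ j : Fin mY, ys j * (U i j * (∑ j', X t i j' * Y t j')) :=
          Finset.sum_comm
      _ = ∑ i : Fin mX, (∑ j', X t i j' * Y t j') * ustar :=
          Finset.sum_congr rfl fun i _ => h1 i
      _ = ustar := by rw [← Finset.sum_mul, hstat, one_mul]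
  have Fd : ∑ j : Fin mY, Y t j * R j = ∑ j : Fin mY, Y t j * P j := by
    calc ∑ j : Fin mY, Y t j * R j
        = ∑ j : Fin mY, ∑ i : Fin mX, Y t j * (U i j * (∑ j', X t i j' * Y t j')) := by
          refine Finset.sum_congr rfl fun j _ => ?_
          simp only [hR]
          rw [Finset.mul_sum]
      _ = ∑ i : Fin mX, ∑ j : Fin mY, Y t j * (U i j * (∑ j', X t i j' * Y t j')) :=
          Finset.sum_comm
      _ = ∑ i : Fin mX, (∑ j', X t i j' * Y t j') * W i := by
          refine Finset.sum_congr rfl fun i _ => ?_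
          simp only [hW]
          have e := Finset.mul_sum (Finset.univ : Finset (Fin mY))
            (fun j => U i j * Y t j) (∑ j', X t i j' * Y t j')
          rw [e]
          exact Finset.sum_congr rfl fun j _ => by ring
      _ = ∑ i : Fin mX, ∑ j' : Fin mY, X t i j' * Y t j' * W i :=
          Finset.sum_congr rfl fun i _ => by rw [Finset.sum_mul]
      _ = ∑ j' : Fin mY, ∑ i : Fin mX, X t i j' * Y t j' * W i := Finset.sum_comm
      _ = ∑ j : Fin mY, Y t j * P j := by
          refine Finset.sum_congr rfl fun j _ => ?_
          simp only [hP]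
          rw [Finset.mul_sum]
          exact Finset.sum_congr rfl fun i _ => by ring
  -- simplify the X-part of the derivative
  have hXpart : (∑ j : Fin mY, ∑ i : Fin mX,
      -(xs i * ((Y t j * W i) - ∑ i' : Fin mX, X t i' j * (Y t j * W i'))))
      = -(ustar - ∑ j : Fin mY, Y t j * P j) := by
    have inner : ∀ j : Fin mY, (∑ i : Fin mX,
        xs i * ((Y t j * W i) - ∑ i' : Fin mX, X t i' j * (Y t j * W i')))
        = Y t j * ustar - Y t j * P j := by
      intro j
      have e1 : ∑ i : Fin mX, xs i * ((Y t j * W i) - ∑ i' : Fin mX, X t i' j * (Y t j * W i'))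
          = Y t j * (∑ i, xs i * W i) - (∑ i, xs i) * (∑ i' : Fin mX, X t i' j * (Y t j * W i')) := by
        rw [Finset.sum_mul, Finset.mul_sum, ← Finset.sum_sub_distrib]
        exact Finset.sum_congr rfl fun i _ => by ring
      rw [e1, Fa, hxssum, one_mul]
      congr 1
      simp only [hP]
      rw [Finset.mul_sum]
      exact Finset.sum_congr rfl fun i _ => by ring
    calc (∑ j : Fin mY, ∑ i : Fin mX,
        -(xs i * ((Y t j * W i) - ∑ i' : Fin mX, X t i' j * (Y t j * W i'))))
        = -∑ j : Fin mY, ∑ i : Fin mX,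
            xs i * ((Y t j * W i) - ∑ i' : Fin mX, X t i' j * (Y t j * W i')) := by
          rw [← Finset.sum_neg_distrib]
          exact Finset.sum_congr rfl fun j _ => by rw [Finset.sum_neg_distrib]
      _ = -∑ j : Fin mY, (Y t j * ustar - Y t j * P j) := by
          rw [neg_inj]; exact Finset.sum_congr rfl fun j _ => inner j
      _ = -(ustar - ∑ j : Fin mY, Y t j * P j) := by
          rw [Finset.sum_sub_distrib, ← Finset.sum_mul, hYsum, one_mul]
  -- simplify the Y-part of the derivative
  have hYpart : (∑ j : Fin mY, ys j * ((R j + P j) - ∑ j₂ : Fin mY, Y t j₂ * (R j₂ + P j₂)))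
      = (ustar + ∑ j : Fin mY, ys j * P j) - 2 * ∑ j : Fin mY, Y t j * P j := by
    have hH : ∑ j₂ : Fin mY, Y t j₂ * (R j₂ + P j₂) = 2 * ∑ j : Fin mY, Y t j * P j := by
      calc ∑ j₂ : Fin mY, Y t j₂ * (R j₂ + P j₂)
          = (∑ j : Fin mY, Y t j * R j) + ∑ j : Fin mY, Y t j * P j := by
            rw [← Finset.sum_add_distrib]
            exact Finset.sum_congr rfl fun j _ => by ring
        _ = 2 * ∑ j : Fin mY, Y t j * P j := by rw [Fd]; ring
    calc ∑ j : Fin mY, ys j * ((R j + P j) - ∑ j₂ : Fin mY, Y t j₂ * (R j₂ + P j₂))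
        = ((∑ j, ys j * R j) + ∑ j, ys j * P j)
            - (∑ j, ys j) * (∑ j₂ : Fin mY, Y t j₂ * (R j₂ + P j₂)) := by
          rw [Finset.sum_mul, ← Finset.sum_add_distrib, ← Finset.sum_sub_distrib]
          exact Finset.sum_congr rfl fun j _ => by ring
      _ = (ustar + ∑ j : Fin mY, ys j * P j) - 2 * ∑ j : Fin mY, Y t j * P j := by
          rw [Fc, hyssum, one_mul, hH]
  rw [hXpart, hYpart]
  -- the derivative equals ∑ (ys - Y) P
  have expand : ∑ j : Fin mY, (ys j - Y t j) * P j
      = (∑ j : Fin mY, ys j * P j) - ∑ j : Fin mY, Y t j * P j := by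
    rw [← Finset.sum_sub_distrib]
    exact Finset.sum_congr rfl fun j _ => by ring
  -- the quadratic form with δ = Y t - ys
  have hδne : (fun j => Y t j - ys j) ≠ 0 := by
    intro h
    apply hne
    funext j
    have := congrFun h j
    simpa [sub_eq_zero] using this
  have hδsum : ∑ j : Fin mY, (Y t j - ys j) = 0 := by
    rw [Finset.sum_sub_distrib, hYsum, hyssum, sub_self]
  have hpos := hPD _ hδne hδsum
  have Ff : ∀ j : Fin mY, ∑ j' : Fin mY, (∑ i : Fin mX, X t i j * U i j') * ys j' = ustar := by
    intro j
    calc ∑ j' : Fin mY, (∑ i : Fin mX, X t i j * U i j') * ys j'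
        = ∑ j' : Fin mY, ∑ i : Fin mX, X t i j * (U i j' * ys j') := by
          refine Finset.sum_congr rfl fun j' _ => ?_
          rw [Finset.sum_mul]
          exact Finset.sum_congr rfl fun i _ => by ring
      _ = ∑ i : Fin mX, ∑ j' : Fin mY, X t i j * (U i j' * ys j') := Finset.sum_comm
      _ = ∑ i : Fin mX, X t i j * ustar := by
          refine Finset.sum_congr rfl fun i _ => ?_
          rw [← Finset.mul_sum, hNy i]
      _ = ustar := by rw [← Finset.sum_mul, hXsum t j, one_mul]
  have hquad : ∑ j : Fin mY, ∑ j' : Fin mY,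
      (Y t j - ys j) * (∑ i : Fin mX, X t i j * U i j') * (Y t j' - ys j')
      = -∑ j : Fin mY, (ys j - Y t j) * P j := by
    have inner : ∀ j : Fin mY, ∑ j' : Fin mY,
        (Y t j - ys j) * (∑ i : Fin mX, X t i j * U i j') * (Y t j' - ys j')
        = (Y t j - ys j) * (P j - ustar) := by
      intro j
      have e1 : ∑ j' : Fin mY,
          (Y t j - ys j) * (∑ i : Fin mX, X t i j * U i j') * (Y t j' - ys j')
          = (Y t j - ys j) * ((∑ j' : Fin mY, (∑ i : Fin mX, X t i j * U i j') * Y t j')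
            - ∑ j' : Fin mY, (∑ i : Fin mX, X t i j * U i j') * ys j') := by
        rw [mul_sub, Finset.mul_sum, Finset.mul_sum, ← Finset.sum_sub_distrib]
        exact Finset.sum_congr rfl fun j' _ => by ring
      rw [e1, ← swap, Ff]
    calc ∑ j : Fin mY, ∑ j' : Fin mY,
        (Y t j - ys j) * (∑ i : Fin mX, X t i j * U i j') * (Y t j' - ys j')
        = ∑ j : Fin mY, (Y t j - ys j) * (P j - ustar) :=
          Finset.sum_congr rfl fun j _ => inner j
      _ = (∑ j : Fin mY, (Y t j - ys j) * P j) - (∑ j : Fin mY, (Y t j - ys j)) * ustar := by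
          rw [Finset.sum_mul, ← Finset.sum_sub_distrib]
          exact Finset.sum_congr rfl fun j _ => by ring
      _ = ∑ j : Fin mY, (Y t j - ys j) * P j := by rw [hδsum, zero_mul, sub_zero]
      _ = -∑ j : Fin mY, (ys j - Y t j) * P j := by
          rw [← Finset.sum_neg_distrib]
          exact Finset.sum_congr rfl fun j _ => by ring
  rw [hquad] at hpos
  rw [expand] at hpos
  linarith
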